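/- In the deterministic service model, the value function is nondecreasing in the current period: for all r, t ∈ ℕ and every finite multiset M of deadlines, V(r, t, M) ≤ V(r, t+1, M); that is, postponing the same remaining workload by one period cannot decrease the accumulated inconvenience. -/

import Mathlib

/-- Inconvenience function: `f η t d = η^(t-d+1)` if the deadline `d` is due
(`d ≤ t`), and `0` otherwise. -/
noncomputable def inconvenience (η : ℝ) (t d : ℕ) : ℝ :=
  if d ≤ t then η ^ (t - d + 1) else 0

/-- Value function of the deterministic service model: over `r` remaining
periods, starting in period `t` with multiset `M` of customer deadlines and
per-period service capacity `m`, the minimal accumulated inconvenience.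
`V η m 0 t M = 0` and
`V η m (r+1) t M = min over submultisets A ≤ M with card A ≤ m of
  [∑_{d ∈ M - A} f(t,d) + V η m r (t+1) (M - A)]`. -/
noncomputable def V (η : ℝ) (m : ℕ) : ℕ → ℕ → Multiset ℕ → ℝ
  | 0, _, _ => 0
  | r + 1, t, M =>
      ⨅ A : {A : Multiset ℕ // A ≤ M ∧ Multiset.card A ≤ m},
        (((M - A.1).map (inconvenience η t)).sum + V η m r (t + 1) (M - A.1))

lemma inconvenience_nonneg (η : ℝ) (hη : 1 < η) (t d : ℕ) :
    0 ≤ inconvenience η t d := by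
  unfold inconvenience
  split
  · positivity
  · exact le_rfl

lemma inconvenience_mono (η : ℝ) (hη : 1 < η) (t d : ℕ) :
    inconvenience η t d ≤ inconvenience η (t + 1) d := by
  unfold inconvenience
  by_cases h : d ≤ t
  · rw [if_pos h, if_pos (h.trans (Nat.le_succ t))]
    exact pow_le_pow_right₀ hη.le (by omega)
  · rw [if_neg h]
    split
    · positivity
    · exact le_rfl

lemma V_nonneg (η : ℝ) (hη : 1 < η) (m r t : ℕ) (M : Multiset ℕ) :
    0 ≤ V η m r t M := by
  induction r generalizing t M with
  | zero => simp [V]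
  | succ r ih =>
    rw [V]
    haveI : Nonempty {A : Multiset ℕ // A ≤ M ∧ Multiset.card A ≤ m} :=
      ⟨⟨0, zero_le, by simp⟩⟩
    apply le_ciInf
    intro A
    have h1 : 0 ≤ ((M - A.1).map (inconvenience η t)).sum := by
      apply Multiset.sum_nonneg
      intro x hx
      obtain ⟨d, _, rfl⟩ := Multiset.mem_map.mp hx
      exact inconvenience_nonneg η hη t d
    linarith [ih (t+1) (M - A.1)]

/-- The value function is nondecreasing in the current period: postponing the
same remaining workload by one period cannot decrease the accumulated
inconvenience. -/
theorem value_mono_period (η : ℝ) (hη : 1 < η) (m : ℕ)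
    (r t : ℕ) (M : Multiset ℕ) :
    V η m r t M ≤ V η m r (t + 1) M := by
  induction r generalizing t M with
  | zero => simp [V]
  | succ r ih =>
    rw [V, V]
    haveI : Nonempty {A : Multiset ℕ // A ≤ M ∧ Multiset.card A ≤ m} :=
      ⟨⟨0, zero_le, by simp⟩⟩
    apply ciInf_mono
    · refine ⟨0, ?_⟩
      rintro x ⟨A, rfl⟩
      have h1 : 0 ≤ ((M - A.1).map (inconvenience η t)).sum := by
        apply Multiset.sum_nonneg
        intro x hx
        obtain ⟨d, _, rfl⟩ := Multiset.mem_map.mp hx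
        exact inconvenience_nonneg η hη t d
      have := V_nonneg η hη m r (t+1) (M - A.1)
      dsimp only
      linarith
    · intro A
      have hsum : ((M - A.1).map (inconvenience η t)).sum ≤
          ((M - A.1).map (inconvenience η (t+1))).sum := by
        apply Multiset.sum_map_le_sum_map
        intro d _
        exact inconvenience_mono η hη t d
      exact add_le_add hsum (ih (t+1) (M - A.1))
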